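/- Let T be a rooted caterpillar tree on n leaves (a rooted binary phylogenetic X-tree with exactly one cherry) whose positive edge lengths satisfy the ultrametric condition, and let k be a branching value of T. Then the number of size-k maxPD sets of T is m(T,k) = n − k + 1. -/

import Mathlib

/-!
Rooted phylogenetic `X`-trees with positive edge lengths.

A tree on a finite vertex type `V` is encoded by its parent function: the root
has no parent, every other vertex has one, and iterating the parent function
reaches the root.  The edge into a non-root vertex `v` has length `len v`, and
`hgt v` is the distance from the root to `v`.  Leaves are the vertices with no
children; the taxon set `X` of the paper is the set `leaves` of leaves.
Every non-leaf, non-root vertex has out-degree (number of children) at least 2.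
-/

noncomputable section

attribute [local instance] Classical.propDecidable

structure PhyloTree (V : Type) [Fintype V] [DecidableEq V] where
  root : V
  parent : V → Option V
  len : V → ℝ
  hgt : V → ℝ
  parent_root : parent root = none
  parent_isSome : ∀ v, v ≠ root → (parent v).isSome
  reaches_root : ∀ v, Relation.ReflTransGen (fun a b => parent a = some b) v root
  hgt_root : hgt root = 0
  hgt_eq : ∀ v u, parent v = some u → hgt v = hgt u + len v
  len_pos : ∀ v, v ≠ root → 0 < len v
  outdeg_ge_two : ∀ v, v ≠ root → (∃ u, parent u = some v) →
    2 ≤ Set.ncard {u | parent u = some v}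

namespace PhyloTree

variable {V : Type} [Fintype V] [DecidableEq V]

/-- `T.step a b` : `b` is the parent of `a`. -/
def step (T : PhyloTree V) (a b : V) : Prop := T.parent a = some b

/-- `T.anc u v` : `u` is an ancestor of `v`, i.e. `u` lies on the (unique) path
from the root to `v` (reflexively). -/
def anc (T : PhyloTree V) (u v : V) : Prop := Relation.ReflTransGen T.step v u

/-- a leaf is a vertex with no children. -/
def IsLeaf (T : PhyloTree V) (v : V) : Prop := ∀ u, T.parent u ≠ some v

/-- the leaf set (the taxon set `X`). -/
def leaves (T : PhyloTree V) : Set V := {v | T.IsLeaf v}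

/-- Phylogenetic diversity of a set `Y`: the total length of all edges `e`
whose set of descendant leaves meets `Y` (the edge into a non-root vertex `v`
has length `T.len v`). -/
def PD (T : PhyloTree V) (Y : Set V) : ℝ :=
  ∑ v : V, if v ≠ T.root ∧ ∃ x ∈ Y, T.IsLeaf x ∧ T.anc v x then T.len v else 0

/-- the ultrametric condition: all leaves are at the same distance from the root. -/
def Ultrametric (T : PhyloTree V) : Prop :=
  ∀ x y, T.IsLeaf x → T.IsLeaf y → T.hgt x = T.hgt y

/-- `R d`: the set of vertices within distance `d` above some leaf. -/
def R (T : PhyloTree V) (d : ℝ) : Set V :=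
  {v | ∃ x, T.IsLeaf x ∧ T.anc v x ∧ T.hgt x - T.hgt v ≤ d}

/-- adjacency in the forest induced by `T` on a vertex set `S`. -/
def adjIn (T : PhyloTree V) (S : Set V) (u v : V) : Prop :=
  u ∈ S ∧ v ∈ S ∧ (T.parent u = some v ∨ T.parent v = some u)

/-- the connected components of the forest induced by `T` on `S`. -/
def components (T : PhyloTree V) (S : Set V) : Set (Set V) :=
  {C | ∃ v ∈ S, C = S ∩ {u | Relation.ReflTransGen (T.adjIn S) v u}}

/-- `c d`: the number of connected components of the forest `T[R(d)]`. -/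
def ccount (T : PhyloTree V) (d : ℝ) : ℕ := (T.components (T.R d)).ncard

/-- `k` is a branching value if `T[R(d)]` has exactly `k` components for some `d ≥ 0`. -/
def IsBranchingValue (T : PhyloTree V) (k : ℕ) : Prop := ∃ d : ℝ, 0 ≤ d ∧ T.ccount d = k

/-- the branching distance `d_k = min {d : c(d) = k}`. -/
def branchDist (T : PhyloTree V) (k : ℕ) : ℝ := sInf {d | 0 ≤ d ∧ T.ccount d = k}

/-- `k⁻`: the largest branching value `≤ k`. -/
def kminus (T : PhyloTree V) (k : ℕ) : ℕ := sSup {j | j ≤ k ∧ T.IsBranchingValue j}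

/-- `k⁺`: the smallest branching value `≥ k`. -/
def kplus (T : PhyloTree V) (k : ℕ) : ℕ := sInf {j | k ≤ j ∧ T.IsBranchingValue j}

/-- `A` is a size-`k` maxPD set. -/
def IsMaxPD (T : PhyloTree V) (k : ℕ) (A : Set V) : Prop :=
  A ⊆ T.leaves ∧ A.ncard = k ∧ ∀ Y ⊆ T.leaves, Y.ncard = k → T.PD Y ≤ T.PD A

/-- `A` is a size-`k` minPD set. -/
def IsMinPD (T : PhyloTree V) (k : ℕ) (A : Set V) : Prop :=
  A ⊆ T.leaves ∧ A.ncard = k ∧ ∀ Y ⊆ T.leaves, Y.ncard = k → T.PD A ≤ T.PD Y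

/-- `m T k`: the number of size-`k` maxPD sets of `T`. -/
def m (T : PhyloTree V) (k : ℕ) : ℕ := {A : Set V | T.IsMaxPD k A}.ncard

/-- `T` is binary: every non-leaf vertex has exactly two children. -/
def Binary (T : PhyloTree V) : Prop :=
  ∀ v, ¬ T.IsLeaf v → Set.ncard {u | T.parent u = some v} = 2

end PhyloTree

namespace PhyloTree

variable {V : Type} [Fintype V] [DecidableEq V]

/-- a cherry: a two-element set of leaves with a common parent. -/
def IsCherry (T : PhyloTree V) (p : Set V) : Prop :=
  ∃ x y v, x ≠ y ∧ p = {x, y} ∧ T.IsLeaf x ∧ T.IsLeaf y ∧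
    T.parent x = some v ∧ T.parent y = some v

/-- a rooted caterpillar tree: a rooted binary phylogenetic tree with exactly
one cherry. -/
def IsCaterpillar (T : PhyloTree V) : Prop :=
  T.Binary ∧ ∃! p : Set V, T.IsCherry p

end PhyloTree
namespace PhyloTree

open Relation

variable {V : Type} [Fintype V] [DecidableEq V] {T : PhyloTree V}

lemma step_ne_root {a b : V} (h : T.step a b) : a ≠ T.root := by
  intro h'
  have h2 : T.parent a = some b := h
  rw [h', T.parent_root] at h2
  exact Option.some_ne_none b h2.symm

lemma step_det {a b c : V} (h1 : T.step a b) (h2 : T.step a c) : b = c := by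
  rw [step, h2] at h1; exact (Option.some.inj h1).symm

lemma hgt_lt_of_step {a b : V} (h : T.step a b) : T.hgt b < T.hgt a := by
  have := T.hgt_eq a b h
  have hp := T.len_pos a (step_ne_root h)
  linarith

lemma hgt_le_of_anc {u v : V} (h : T.anc u v) : T.hgt u ≤ T.hgt v := by
  induction h with
  | refl => exact le_refl _
  | tail hs hstep ih => exact le_trans (le_of_lt (hgt_lt_of_step hstep)) ih

lemma anc_refl (u : V) : T.anc u u := ReflTransGen.refl

lemma anc_trans {u v w : V} (h1 : T.anc u v) (h2 : T.anc v w) : T.anc u w :=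
  ReflTransGen.trans h2 h1

lemma eq_of_anc_of_hgt_le {u v : V} (h : T.anc u v) (hh : T.hgt v ≤ T.hgt u) :
    u = v := by
  rcases (ReflTransGen.cases_tail h) with rfl | ⟨b, hb, hstep⟩
  · rfl
  · exact absurd hh (not_le.mpr (lt_of_lt_of_le (hgt_lt_of_step hstep) (hgt_le_of_anc hb)))

lemma hgt_lt_of_anc_ne {u v : V} (h : T.anc u v) (hne : u ≠ v) :
    T.hgt u < T.hgt v :=
  lt_of_le_of_ne (hgt_le_of_anc h) (fun he => hne (eq_of_anc_of_hgt_le h he.ge))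

lemma anc_antisymm {u v : V} (h1 : T.anc u v) (h2 : T.anc v u) : u = v :=
  eq_of_anc_of_hgt_le h1 (hgt_le_of_anc h2)

lemma anc_root (v : V) : T.anc T.root v := T.reaches_root v

lemma rtg_comp {α : Type*} {r : α → α → Prop}
    (hdet : ∀ ⦃a b c⦄, r a b → r a c → b = c) :
    ∀ {x u v}, Relation.ReflTransGen r x u → Relation.ReflTransGen r x v →
      Relation.ReflTransGen r u v ∨ Relation.ReflTransGen r v u := by
  intro x u v h1
  induction h1 using ReflTransGen.head_induction_on with
  | refl => intro h2; exact Or.inl h2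
  | head hstep htail ih =>
    intro h2
    rcases ReflTransGen.cases_head h2 with rfl | ⟨b, hb, hrest⟩
    · exact Or.inr (ReflTransGen.head hstep htail)
    · cases hdet hstep hb
      exact ih hrest

/-- two ancestors of a common vertex are comparable. -/
lemma anc_comparable {u v x : V} (h1 : T.anc u x) (h2 : T.anc v x) :
    T.anc u v ∨ T.anc v u := by
  have h1' : Relation.ReflTransGen T.step x u := h1
  have h2' : Relation.ReflTransGen T.step x v := h2
  have hdet : ∀ ⦃a b c : V⦄, T.step a b → T.step a c → b = c :=
    fun _ _ _ ha hb => step_det ha hb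
  exact (rtg_comp hdet h1' h2').symm

/-- a descendant of a leaf is the leaf itself. -/
lemma eq_of_leaf_anc {x w : V} (hx : T.IsLeaf x) (h : T.anc x w) : w = x := by
  rcases (ReflTransGen.cases_tail h) with rfl | ⟨b, hb, hstep⟩
  · rfl
  · exact absurd hstep (hx b)

/-- every vertex has a descendant leaf. -/
lemma exists_desc_leaf (T : PhyloTree V) (v : V) :
    ∃ x, T.IsLeaf x ∧ T.anc v x := by
  classical
  obtain ⟨x, hx, hmax⟩ := (Finset.univ.filter (fun w => T.anc v w)).exists_max_image
    T.hgt ⟨v, by simp [anc_refl]⟩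
  refine ⟨x, fun u hu => ?_, (Finset.mem_filter.mp hx).2⟩
  have hxv : T.anc v x := (Finset.mem_filter.mp hx).2
  have hvu : T.anc v u := anc_trans hxv (ReflTransGen.single hu)
  have := hmax u (Finset.mem_filter.mpr ⟨Finset.mem_univ _, hvu⟩)
  exact absurd this (not_le.mpr (hgt_lt_of_step hu))

lemma eq_root_of_anc_root {v : V} (h : T.anc v T.root) : v = T.root := by
  rcases ReflTransGen.cases_head h with rfl | ⟨b, hb, _⟩
  · rfl
  · have hb' : T.parent T.root = some b := hb
    rw [T.parent_root] at hb'
    exact absurd hb'.symm (Option.some_ne_none b)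

lemma anc_of_anc_ne {v u p : V} (hp : T.step u p) (h : T.anc v u) (hne : v ≠ u) :
    T.anc v p := by
  rcases ReflTransGen.cases_head h with rfl | ⟨b, hb, hrest⟩
  · exact absurd rfl hne
  · cases step_det hp hb; exact hrest

lemma anc_of_step_anc {v u p : V} (hp : T.step u p) (h : T.anc v p) : T.anc v u :=
  ReflTransGen.head hp h

/-- telescoping: the total length of the edges on the path from the root
to `u` is `hgt u`. -/
lemma sum_len_anc (T : PhyloTree V) (u : V) :
    ∑ v ∈ Finset.univ.filter (fun v => v ≠ T.root ∧ T.anc v u), T.len v = T.hgt u := by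
  have h := T.reaches_root u
  induction h using ReflTransGen.head_induction_on with
  | refl =>
      have he : Finset.univ.filter (fun v => v ≠ T.root ∧ T.anc v T.root) = ∅ := by
        ext v
        simp only [Finset.mem_filter, Finset.mem_univ, true_and, Finset.notMem_empty,
          iff_false, not_and]
        intro hv hanc
        exact hv (eq_root_of_anc_root hanc)
      rw [he, Finset.sum_empty, T.hgt_root]
  | head hstep htail ih =>
      rename_i a c
      have hstep' : T.step a c := hstep
      have hins : Finset.univ.filter (fun v => v ≠ T.root ∧ T.anc v a)
          = insert a (Finset.univ.filter (fun v => v ≠ T.root ∧ T.anc v c)) := by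
        ext v
        simp only [Finset.mem_filter, Finset.mem_univ, true_and, Finset.mem_insert]
        constructor
        · rintro ⟨hv, hanc⟩
          by_cases hva : v = a
          · exact Or.inl hva
          · exact Or.inr ⟨hv, anc_of_anc_ne hstep' hanc hva⟩
        · rintro (rfl | ⟨hv, hanc⟩)
          · exact ⟨step_ne_root hstep', anc_refl v⟩
          · exact ⟨hv, anc_of_step_anc hstep' hanc⟩
      have hnotmem : a ∉ Finset.univ.filter (fun v => v ≠ T.root ∧ T.anc v c) := by
        simp only [Finset.mem_filter, Finset.mem_univ, true_and, not_and]
        intro _ hanc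
        exact absurd (hgt_le_of_anc hanc) (not_le.mpr (hgt_lt_of_step hstep'))
      rw [hins, Finset.sum_insert hnotmem, ih, T.hgt_eq a c hstep']
      ring

lemma not_isLeaf_root {v : V} (hv : v ≠ T.root) : ¬ T.IsLeaf T.root := by
  rcases ReflTransGen.cases_tail (T.reaches_root v) with h | ⟨b, _, hstep⟩
  · exact absurd h.symm hv
  · exact fun hL => hL b hstep

lemma leaf_ne_root {x v : V} (hx : T.IsLeaf x) (hv : v ≠ T.root) : x ≠ T.root :=
  fun h => not_isLeaf_root hv (h ▸ hx)

lemma exists_parent {x : V} (hne : x ≠ T.root) : ∃ p, T.step x p :=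
  ⟨(T.parent x).get (T.parent_isSome x hne), (Option.some_get _).symm⟩

lemma not_isLeaf_of_step {x p : V} (h : T.step x p) : ¬ T.IsLeaf p :=
  fun hL => hL x h

/-- below every non-leaf vertex there is a cherry. -/
lemma exists_cherry_below (hB : T.Binary) {v : V} (hv : ¬ T.IsLeaf v) :
    ∃ x y w, x ≠ y ∧ T.IsLeaf x ∧ T.IsLeaf y ∧ T.step x w ∧ T.step y w ∧
      T.anc v x ∧ T.anc v y := by
  classical
  obtain ⟨w, hw, hmax⟩ := (Finset.univ.filter
      (fun w => T.anc v w ∧ ¬ T.IsLeaf w)).exists_max_image T.hgt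
    ⟨v, by simp [anc_refl, hv]⟩
  obtain ⟨hvw, hwnl⟩ := (Finset.mem_filter.mp hw).2
  have h2 : Set.ncard {u | T.parent u = some w} = 2 := hB w hwnl
  obtain ⟨x, y, hxy, hset⟩ := Set.ncard_eq_two.mp h2
  have hxw : T.step x w := by
    have : x ∈ ({x, y} : Set V) := by simp
    rw [← hset] at this; exact this
  have hyw : T.step y w := by
    have : y ∈ ({x, y} : Set V) := by simp
    rw [← hset] at this; exact this
  have hancx : T.anc v x := anc_trans hvw (ReflTransGen.single hxw)
  have hancy : T.anc v y := anc_trans hvw (ReflTransGen.single hyw)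
  have hleaf : ∀ z, T.step z w → T.anc v z → T.IsLeaf z := by
    intro z hzw hvz
    by_contra hznl
    have hz : z ∈ Finset.univ.filter (fun w => T.anc v w ∧ ¬ T.IsLeaf w) := by
      simp only [Finset.mem_filter, Finset.mem_univ, true_and]; exact ⟨hvz, hznl⟩
    exact absurd (hmax z hz) (not_le.mpr (hgt_lt_of_step hzw))
  exact ⟨x, y, w, hxy, hleaf x hxw hancx, hleaf y hyw hancy, hxw, hyw, hancx, hancy⟩

/-- in a caterpillar, any two non-leaf vertices are comparable. -/
lemma interior_comparable (hB : T.Binary)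
    (huniq : ∀ p q : Set V, T.IsCherry p → T.IsCherry q → p = q)
    {u v : V} (hu : ¬ T.IsLeaf u) (hv : ¬ T.IsLeaf v) :
    T.anc u v ∨ T.anc v u := by
  by_contra hcon
  push_neg at hcon
  obtain ⟨x, y, w, hxy, hLx, hLy, hxw, hyw, hux, _⟩ := exists_cherry_below hB hu
  obtain ⟨x', y', w', hxy', hLx', hLy', hxw', hyw', hux', hvy'⟩ := exists_cherry_below hB hv
  have hc1 : T.IsCherry {x, y} := ⟨x, y, w, hxy, rfl, hLx, hLy, hxw, hyw⟩
  have hc2 : T.IsCherry {x', y'} := ⟨x', y', w', hxy', rfl, hLx', hLy', hxw', hyw'⟩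
  have heq := huniq _ _ hc1 hc2
  have hx : x ∈ ({x', y'} : Set V) := by rw [← heq]; simp
  have hvx : T.anc v x := by
    rcases hx with rfl | rfl
    · exact hux'
    · exact hvy'
  rcases anc_comparable hux hvx with h | h
  · exact hcon.1 h
  · exact hcon.2 h

/-- the children of the cherry parent are exactly the two cherry leaves. -/
lemma children_cherry (hB : T.Binary) {x1 x2 v1 : V} (h12 : x1 ≠ x2)
    (hp1 : T.step x1 v1) (hp2 : T.step x2 v1) :
    {u | T.parent u = some v1} = {x1, x2} := by
  have hnl : ¬ T.IsLeaf v1 := not_isLeaf_of_step hp1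
  have h2 : Set.ncard {u | T.parent u = some v1} = 2 := hB v1 hnl
  have hsub : ({x1, x2} : Set V) ⊆ {u | T.parent u = some v1} := by
    rintro z (rfl | rfl)
    · exact hp1
    · exact hp2
  exact (Set.eq_of_subset_of_ncard_le hsub
    (by rw [h2, Set.ncard_pair h12]) (Set.toFinite _)).symm

lemma step_v1_mem (hB : T.Binary) {x1 x2 v1 y : V} (h12 : x1 ≠ x2)
    (hp1 : T.step x1 v1) (hp2 : T.step x2 v1) (hy : T.step y v1) :
    y = x1 ∨ y = x2 := by
  have : y ∈ {u | T.parent u = some v1} := hy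
  rw [children_cherry hB h12 hp1 hp2] at this
  exact this

/-- two distinct leaves with a common parent must be the unique cherry. -/
lemma common_parent_eq (hB : T.Binary)
    (huniq : ∀ p q : Set V, T.IsCherry p → T.IsCherry q → p = q)
    {x1 x2 v1 : V} (h12 : x1 ≠ x2) (hL1 : T.IsLeaf x1) (hL2 : T.IsLeaf x2)
    (hp1 : T.step x1 v1) (hp2 : T.step x2 v1)
    {y y' w : V} (hyy' : y ≠ y') (hLy : T.IsLeaf y) (hLy' : T.IsLeaf y')
    (hyw : T.step y w) (hy'w : T.step y' w) :
    (y = x1 ∨ y = x2) ∧ w = v1 := by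
  have hc1 : T.IsCherry {y, y'} := ⟨y, y', w, hyy', rfl, hLy, hLy', hyw, hy'w⟩
  have hc2 : T.IsCherry {x1, x2} := ⟨x1, x2, v1, h12, rfl, hL1, hL2, hp1, hp2⟩
  have heq := huniq _ _ hc1 hc2
  have hy : y ∈ ({x1, x2} : Set V) := by rw [← heq]; simp
  rcases hy with rfl | rfl
  · exact ⟨Or.inl rfl, step_det hyw hp1⟩
  · exact ⟨Or.inr rfl, step_det hyw hp2⟩

/-- the cherry parent is the deepest non-leaf vertex. -/
lemma anc_v1_of_not_leaf (hB : T.Binary)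
    (huniq : ∀ p q : Set V, T.IsCherry p → T.IsCherry q → p = q)
    {x1 x2 v1 : V} (h12 : x1 ≠ x2) (hL1 : T.IsLeaf x1) (hL2 : T.IsLeaf x2)
    (hp1 : T.step x1 v1) (hp2 : T.step x2 v1)
    {w : V} (hw : ¬ T.IsLeaf w) : T.anc w v1 := by
  rcases interior_comparable hB huniq hw (not_isLeaf_of_step hp1) with h | h
  · exact h
  · -- h : T.anc v1 w
    rcases ReflTransGen.cases_tail h with h' | ⟨c, hc, hstep⟩
    · rw [← h']; exact anc_refl v1
    · -- hstep : T.step c v1, hc : ReflTransGen T.step w c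
      have hcx : c = x1 ∨ c = x2 := step_v1_mem hB h12 hp1 hp2 hstep
      have hcleaf : T.IsLeaf c := by rcases hcx with rfl | rfl <;> assumption
      have : w = c := eq_of_leaf_anc hcleaf hc
      exact absurd (this ▸ hcleaf) hw

/-- the PD formula for an ultrametric caterpillar: for a nonempty set `t` of
leaves, `PD t = h - min len + ∑ len`. -/
lemma PD_formula (hU : T.Ultrametric) (hB : T.Binary)
    (huniq : ∀ p q : Set V, T.IsCherry p → T.IsCherry q → p = q)
    {x1 x2 v1 : V} (h12 : x1 ≠ x2) (hL1 : T.IsLeaf x1) (hL2 : T.IsLeaf x2)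
    (hp1 : T.step x1 v1) (hp2 : T.step x2 v1)
    (t : Finset V) (hsub : ∀ x ∈ t, T.IsLeaf x) (hne : t.Nonempty) :
    T.PD ↑t = T.hgt x1 - t.inf' hne T.len + ∑ x ∈ t, T.len x := by
  have hx1r : x1 ≠ T.root := step_ne_root hp1
  have hner : ∀ x ∈ t, x ≠ T.root := fun x hx => leaf_ne_root (hsub x hx) hx1r
  obtain ⟨xs, hxs, hval⟩ := Finset.exists_mem_eq_inf' hne T.len
  obtain ⟨ps, hps⟩ := exists_parent (hner xs hxs)
  have hhgt : ∀ x ∈ t, T.hgt x = T.hgt x1 := fun x hx => hU x x1 (hsub x hx) hL1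
  have hkey : ∀ x ∈ t, ∀ p, T.step x p → T.anc p ps := by
    intro x hx p hp
    have h1 : T.hgt x = T.hgt p + T.len x := T.hgt_eq x p hp
    have h2 : T.hgt xs = T.hgt ps + T.len xs := T.hgt_eq xs ps hps
    have hle : T.len xs ≤ T.len x := hval ▸ Finset.inf'_le T.len hx
    have hple : T.hgt p ≤ T.hgt ps := by
      have := hhgt x hx; have := hhgt xs hxs; linarith
    rcases interior_comparable hB huniq (not_isLeaf_of_step hp) (not_isLeaf_of_step hps)
      with h | h
    · exact h
    · rw [eq_of_anc_of_hgt_le h hple]; exact anc_refl p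
  have hset : Finset.univ.filter
        (fun v => v ≠ T.root ∧ ∃ x ∈ (↑t : Set V), T.IsLeaf x ∧ T.anc v x)
      = t ∪ Finset.univ.filter (fun v => v ≠ T.root ∧ T.anc v ps) := by
    ext v
    simp only [Finset.mem_filter, Finset.mem_union, Finset.mem_univ, true_and,
      Finset.mem_coe]
    constructor
    · rintro ⟨hv, x, hx, hLx, hanc⟩
      by_cases hvx : v = x
      · exact Or.inl (hvx ▸ hx)
      · obtain ⟨p, hp⟩ := exists_parent (hner x hx)
        exact Or.inr ⟨hv, anc_trans (anc_of_anc_ne hp hanc hvx) (hkey x hx p hp)⟩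
    · rintro (hv | ⟨hv, hanc⟩)
      · exact ⟨hner v hv, v, hv, hsub v hv, anc_refl v⟩
      · exact ⟨hv, xs, hxs, hsub xs hxs, anc_of_step_anc hps hanc⟩
  have hdisj : Disjoint t (Finset.univ.filter (fun v => v ≠ T.root ∧ T.anc v ps)) := by
    rw [Finset.disjoint_left]
    intro v hv hv2
    simp only [Finset.mem_filter, Finset.mem_univ, true_and] at hv2
    have : ps = v := eq_of_leaf_anc (hsub v hv) hv2.2
    exact not_isLeaf_of_step hps (this ▸ hsub v hv)
  have bridge : T.PD ↑t = ∑ v ∈ Finset.univ.filter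
      (fun v => v ≠ T.root ∧ ∃ x ∈ (↑t : Set V), T.IsLeaf x ∧ T.anc v x), T.len v := by
    rw [Finset.sum_filter, PD]
    exact Finset.sum_congr rfl (fun v _ => by
      by_cases h : (v ≠ T.root ∧ ∃ x ∈ (↑t : Set V), T.IsLeaf x ∧ T.anc v x) <;> simp [h])
  rw [bridge, hset, Finset.sum_union hdisj, sum_len_anc]
  have h2 : T.hgt xs = T.hgt ps + T.len xs := T.hgt_eq xs ps hps
  have h3 := hhgt xs hxs
  rw [← hval] at h2
  linarith

lemma len_cherry_eq (hU : T.Ultrametric) {x1 x2 v1 : V}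
    (hL1 : T.IsLeaf x1) (hL2 : T.IsLeaf x2)
    (hp1 : T.step x1 v1) (hp2 : T.step x2 v1) : T.len x1 = T.len x2 := by
  have h1 := T.hgt_eq x1 v1 hp1
  have h2 := T.hgt_eq x2 v1 hp2
  have := hU x1 x2 hL1 hL2
  linarith

lemma len_cherry_lt (hU : T.Ultrametric) (hB : T.Binary)
    (huniq : ∀ p q : Set V, T.IsCherry p → T.IsCherry q → p = q)
    {x1 x2 v1 : V} (h12 : x1 ≠ x2) (hL1 : T.IsLeaf x1) (hL2 : T.IsLeaf x2)
    (hp1 : T.step x1 v1) (hp2 : T.step x2 v1)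
    {y p : V} (hLy : T.IsLeaf y) (hy1 : y ≠ x1) (hy2 : y ≠ x2)
    (hyp : T.step y p) : T.len x1 < T.len y := by
  have hpnv : p ≠ v1 := by
    rintro rfl
    rcases step_v1_mem hB h12 hp1 hp2 hyp with rfl | rfl
    · exact hy1 rfl
    · exact hy2 rfl
  have hanc : T.anc p v1 :=
    anc_v1_of_not_leaf hB huniq h12 hL1 hL2 hp1 hp2 (not_isLeaf_of_step hyp)
  have hlt : T.hgt p < T.hgt v1 := hgt_lt_of_anc_ne hanc hpnv
  have h1 := T.hgt_eq x1 v1 hp1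
  have h2 := T.hgt_eq y p hyp
  have := hU y x1 hLy hL1
  linarith

lemma len_inj_non_cherry (hU : T.Ultrametric) (hB : T.Binary)
    (huniq : ∀ p q : Set V, T.IsCherry p → T.IsCherry q → p = q)
    {x1 x2 v1 : V} (h12 : x1 ≠ x2) (hL1 : T.IsLeaf x1) (hL2 : T.IsLeaf x2)
    (hp1 : T.step x1 v1) (hp2 : T.step x2 v1)
    {y y' p p' : V} (hLy : T.IsLeaf y) (hLy' : T.IsLeaf y')
    (hy1 : y ≠ x1) (hy2 : y ≠ x2) (hne : y ≠ y')
    (hyp : T.step y p) (hyp' : T.step y' p')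
    (hlen : T.len y = T.len y') : False := by
  have h1 := T.hgt_eq y p hyp
  have h2 := T.hgt_eq y' p' hyp'
  have hhh := hU y y' hLy hLy'
  have hhgt : T.hgt p = T.hgt p' := by linarith
  have hpp : p = p' := by
    rcases interior_comparable hB huniq (not_isLeaf_of_step hyp)
      (not_isLeaf_of_step hyp') with h | h
    · exact eq_of_anc_of_hgt_le h hhgt.ge
    · exact (eq_of_anc_of_hgt_le h hhgt.le).symm
  subst hpp
  rcases (common_parent_eq hB huniq h12 hL1 hL2 hp1 hp2 hne hLy hLy' hyp hyp').1
    with rfl | rfl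
  · exact hy1 rfl
  · exact hy2 rfl

/-- a "top `m`" subset always exists. -/
lemma exists_top_subset (ℓ : V → ℝ) :
    ∀ (m : ℕ) (s : Finset V), m ≤ s.card →
    ∃ u, u ⊆ s ∧ u.card = m ∧ ∀ x ∈ u, ∀ y ∈ s \ u, ℓ y ≤ ℓ x := by
  intro m
  induction m with
  | zero => exact fun s _ => ⟨∅, Finset.empty_subset s, rfl, by simp⟩
  | succ m ih =>
    intro s hm
    have hne : s.Nonempty := Finset.card_pos.mp (by omega)
    obtain ⟨x0, hx0, hmax⟩ := s.exists_max_image ℓ hne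
    obtain ⟨u', hu's, hcard, hprop⟩ := ih (s.erase x0)
      (by rw [Finset.card_erase_of_mem hx0]; omega)
    refine ⟨insert x0 u', ?_, ?_, ?_⟩
    · intro z hz
      rcases Finset.mem_insert.mp hz with rfl | hz
      · exact hx0
      · exact (Finset.mem_erase.mp (hu's hz)).2
    · rw [Finset.card_insert_of_notMem (fun h => (Finset.mem_erase.mp (hu's h)).1 rfl),
        hcard]
    · intro x hx y hy
      have hys : y ∈ s := (Finset.mem_sdiff.mp hy).1
      have hynotu : y ∉ insert x0 u' := (Finset.mem_sdiff.mp hy).2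
      rcases Finset.mem_insert.mp hx with rfl | hxu
      · exact hmax y hys
      · refine hprop x hxu y ?_
        rw [Finset.mem_sdiff, Finset.mem_erase]
        exact ⟨⟨fun h => hynotu (h ▸ Finset.mem_insert_self x0 u'),  hys⟩,
          fun h => hynotu (Finset.mem_insert_of_mem h)⟩

/-- strict comparison with the top subset. -/
lemma sum_lt_top (ℓ : V → ℝ) {s u t : Finset V} (hu : u ⊆ s) (ht : t ⊆ s)
    (hcard : t.card = u.card) (hne : t ≠ u)
    (hstrict : ∀ x ∈ u, ∀ y ∈ s \ u, ℓ y < ℓ x) :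
    ∑ y ∈ t, ℓ y < ∑ x ∈ u, ℓ x := by
  have hBne : (t \ u).Nonempty := by
    rw [Finset.sdiff_nonempty]
    intro hsub
    exact hne (Finset.eq_of_subset_of_card_le hsub (le_of_eq hcard.symm))
  have hANe : (u \ t).Nonempty := by
    rw [Finset.sdiff_nonempty]
    intro hsub
    exact hne (Finset.eq_of_subset_of_card_le hsub (le_of_eq hcard)).symm
  have hcAB : (t \ u).card = (u \ t).card := by
    have h1 := Finset.card_sdiff_add_card_inter t u
    have h2 := Finset.card_sdiff_add_card_inter u t
    rw [Finset.inter_comm] at h2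
    omega
  obtain ⟨xm, hxm, hxval⟩ := Finset.exists_mem_eq_inf' hANe ℓ
  have hkey : ∑ y ∈ t \ u, ℓ y < ∑ x ∈ u \ t, ℓ x := by
    have hlt : ∑ y ∈ t \ u, ℓ y < (t \ u).card • ((u \ t).inf' hANe ℓ) := by
      rw [← Finset.sum_const]
      apply Finset.sum_lt_sum_of_nonempty hBne
      intro y hy
      rw [hxval]
      exact hstrict xm ((Finset.mem_sdiff.mp hxm).1) y
        (Finset.mem_sdiff.mpr ⟨ht (Finset.mem_sdiff.mp hy).1, (Finset.mem_sdiff.mp hy).2⟩)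
    have hle : (u \ t).card • ((u \ t).inf' hANe ℓ) ≤ ∑ x ∈ u \ t, ℓ x :=
      Finset.card_nsmul_le_sum _ _ _ (fun x hx => Finset.inf'_le ℓ hx)
    rw [hcAB] at hlt
    exact lt_of_lt_of_le hlt hle
  have h1 := Finset.sum_inter_add_sum_sdiff t u ℓ
  have h2 := Finset.sum_inter_add_sum_sdiff u t ℓ
  rw [Finset.inter_comm] at h2
  linarith

lemma adjIn_symm {S : Set V} : Symmetric (T.adjIn S) :=
  fun _ _ h => ⟨h.2.1, h.1, h.2.2.symm⟩

lemma components_eq_of_mem {S : Set V} {C1 C2 : Set V}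
    (h1 : C1 ∈ T.components S) (h2 : C2 ∈ T.components S)
    {w : V} (hw1 : w ∈ C1) (hw2 : w ∈ C2) : C1 = C2 := by
  obtain ⟨v1, hv1, rfl⟩ := h1
  obtain ⟨v2, hv2, rfl⟩ := h2
  have hsym : Symmetric (ReflTransGen (T.adjIn S)) := fun a b h =>
    (@Relation.ReflTransGen.stdSymm _ _ ⟨fun x y hxy => adjIn_symm hxy⟩).symm a b h
  have hr1 : Relation.ReflTransGen (T.adjIn S) v1 w := hw1.2
  have hr2 : Relation.ReflTransGen (T.adjIn S) v2 w := hw2.2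
  ext u
  simp only [Set.mem_inter_iff, Set.mem_setOf_eq]
  constructor
  · rintro ⟨hu, hru⟩
    exact ⟨hu, ReflTransGen.trans hr2 (ReflTransGen.trans (hsym hr1) hru)⟩
  · rintro ⟨hu, hru⟩
    exact ⟨hu, ReflTransGen.trans hr1 (ReflTransGen.trans (hsym hr2) hru)⟩

/-- a monotone path whose vertices all lie in `S` is a path in `T[S]`. -/
lemma rel_path {S : Set V} : ∀ {v x : V}, T.anc v x →
    (∀ w, T.anc v w → T.anc w x → w ∈ S) →
    Relation.ReflTransGen (T.adjIn S) v x := by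
  intro v x h
  induction h with
  | refl => intro _; exact ReflTransGen.refl
  | tail h1 hstep ih =>
    rename_i b c
    intro hw
    have hcb : T.anc c b := ReflTransGen.single hstep
    have hbS : b ∈ S := hw b hcb h1
    have hcS : c ∈ S := hw c (anc_refl c) (ReflTransGen.tail h1 hstep)
    refine ReflTransGen.head ⟨hcS, hbS, Or.inr hstep⟩ (ih ?_)
    intro w hbw hwx
    exact hw w (anc_trans hcb hbw) hwx

/-- every component of `T[R d]` contains a leaf. -/
lemma component_leaf {d : ℝ} {C : Set V} (hC : C ∈ T.components (T.R d)) :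
    ∃ x, x ∈ C ∧ T.IsLeaf x := by
  obtain ⟨v, hv, rfl⟩ := hC
  obtain ⟨x, hLx, hanc, hdist⟩ := hv
  have hvx := hgt_le_of_anc hanc
  have hxS : x ∈ T.R d := ⟨x, hLx, anc_refl x, by linarith⟩
  have hrel : Relation.ReflTransGen (T.adjIn (T.R d)) v x := by
    apply rel_path hanc
    intro w hvw hwx
    exact ⟨x, hLx, hwx, by linarith [hgt_le_of_anc hvw]⟩
  exact ⟨x, ⟨hxS, hrel⟩, hLx⟩

lemma ccount_le_card_leaves (T : PhyloTree V) (d : ℝ) :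
    T.ccount d ≤ T.leaves.ncard := by
  classical
  have hleaf : ∀ C ∈ T.components (T.R d), ∃ x, x ∈ C ∧ T.IsLeaf x :=
    fun C hC => component_leaf hC
  set g : Set V → V := fun C =>
    if h : C ∈ T.components (T.R d) then (hleaf C h).choose else T.root with hg
  have hgmem : ∀ C ∈ T.components (T.R d), g C ∈ C ∧ T.IsLeaf (g C) := by
    intro C hC
    simp only [hg, dif_pos hC]
    exact (hleaf C hC).choose_spec
  apply Set.ncard_le_ncard_of_injOn g
  · exact fun C hC => (hgmem C hC).2
  · intro C1 h1 C2 h2 heq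
    exact components_eq_of_mem h1 h2 (hgmem C1 h1).1 (heq ▸ (hgmem C2 h2).1)

lemma le_of_isBranchingValue {k : ℕ} (hbv : T.IsBranchingValue k) :
    k ≤ T.leaves.ncard := by
  obtain ⟨d, _, hd⟩ := hbv
  exact hd ▸ ccount_le_card_leaves T d

/-- the number of size-`k` maxPD sets of an ultrametric caterpillar. -/
lemma maxPD_count (hU : T.Ultrametric) (hB : T.Binary)
    (huniq : ∀ p q : Set V, T.IsCherry p → T.IsCherry q → p = q)
    {x1 x2 v1 : V} (h12 : x1 ≠ x2) (hL1 : T.IsLeaf x1) (hL2 : T.IsLeaf x2)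
    (hp1 : T.step x1 v1) (hp2 : T.step x2 v1)
    (k : ℕ) (hk : 1 ≤ k) (hkn : k ≤ T.leaves.ncard) :
    {A : Set V | T.IsMaxPD k A}.ncard = T.leaves.ncard - k + 1 := by
  classical
  rcases eq_or_lt_of_le hkn with hkeq | hklt
  · -- k = n : the only maxPD set is the full leaf set
    have hone : {A : Set V | T.IsMaxPD k A} = {T.leaves} := by
      ext A
      simp only [Set.mem_setOf_eq, Set.mem_singleton_iff]
      constructor
      · rintro ⟨hsub, hcard, _⟩
        exact Set.eq_of_subset_of_ncard_le hsub (by rw [hcard, hkeq]) (Set.toFinite _)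
      · rintro rfl
        refine ⟨subset_rfl, hkeq.symm, fun Y hY hYcard => ?_⟩
        have : Y = T.leaves :=
          Set.eq_of_subset_of_ncard_le hY (by rw [hYcard, hkeq]) (Set.toFinite _)
        rw [this]
    rw [hone, Set.ncard_singleton]
    omega
  · -- k < n
    set s : Finset V := Finset.univ.filter T.IsLeaf with hsdef
    have hmem : ∀ z, z ∈ s ↔ T.IsLeaf z := by
      intro z; simp [hsdef]
    have hls : T.leaves = ↑s := by
      ext z; simp only [leaves, Set.mem_setOf_eq, Finset.mem_coe, hmem]
    have hN : s.card = T.leaves.ncard := by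
      rw [hls, Set.ncard_coe_finset]
    have hx1r : x1 ≠ T.root := step_ne_root hp1
    have hx1s : x1 ∈ s := (hmem x1).mpr hL1
    have hx2s : x2 ∈ s := (hmem x2).mpr hL2
    obtain ⟨u, hus, hucard, hweak⟩ := exists_top_subset T.len (k - 1) s (by omega)
    have hcard_su : (s \ u).card = s.card - (k - 1) := by
      rw [Finset.card_sdiff_of_subset hus, hucard]
    have h2le : 2 ≤ (s \ u).card := by omega
    have hfind : ∀ c : V, ∃ y ∈ s \ u, y ≠ c := by
      intro c
      obtain ⟨a, ha, b, hb, hab⟩ := Finset.one_lt_card.mp (by omega : 1 < (s \ u).card)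
      by_cases hac : a = c
      · exact ⟨b, hb, fun h => hab (h ▸ hac ▸ rfl)⟩
      · exact ⟨a, ha, hac⟩
    -- the top set avoids the cherry
    have hx1u : x1 ∉ u := by
      intro hx1u
      obtain ⟨y, hy, hy2⟩ := hfind x2
      have hy1 : y ≠ x1 := fun h => (Finset.mem_sdiff.mp hy).2 (h ▸ hx1u)
      have hLy : T.IsLeaf y := (hmem y).mp (Finset.mem_sdiff.mp hy).1
      obtain ⟨py, hpy⟩ := exists_parent (leaf_ne_root hLy hx1r)
      have hlt := len_cherry_lt hU hB huniq h12 hL1 hL2 hp1 hp2 hLy hy1 hy2 hpy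
      have hle := hweak x1 hx1u y hy
      linarith
    have hx2u : x2 ∉ u := by
      intro hx2u
      obtain ⟨y, hy, hy1⟩ := hfind x1
      have hy2 : y ≠ x2 := fun h => (Finset.mem_sdiff.mp hy).2 (h ▸ hx2u)
      have hLy : T.IsLeaf y := (hmem y).mp (Finset.mem_sdiff.mp hy).1
      obtain ⟨py, hpy⟩ := exists_parent (leaf_ne_root hLy hx1r)
      have hlt := len_cherry_lt hU hB huniq h12 hL1 hL2 hp1 hp2 hLy hy1 hy2 hpy
      have heq12 := len_cherry_eq hU hL1 hL2 hp1 hp2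
      have hle := hweak x2 hx2u y hy
      linarith
    -- strict top property
    have hstrict : ∀ x ∈ u, ∀ y ∈ s \ u, T.len y < T.len x := by
      intro x hx y hy
      have hle := hweak x hx y hy
      rcases lt_or_eq_of_le hle with h | h
      · exact h
      · exfalso
        have hxx1 : x ≠ x1 := fun he => hx1u (he ▸ hx)
        have hxx2 : x ≠ x2 := fun he => hx2u (he ▸ hx)
        have hLx : T.IsLeaf x := (hmem x).mp (hus hx)
        have hLy : T.IsLeaf y := (hmem y).mp (Finset.mem_sdiff.mp hy).1
        obtain ⟨px, hpx⟩ := exists_parent (leaf_ne_root hLx hx1r)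
        by_cases hy1 : y = x1
        · subst hy1
          have := len_cherry_lt hU hB huniq h12 hL1 hL2 hp1 hp2 hLx hxx1 hxx2 hpx
          linarith
        · by_cases hy2 : y = x2
          · subst hy2
            have := len_cherry_lt hU hB huniq h12 hL1 hL2 hp1 hp2 hLx hxx1 hxx2 hpx
            have heq12 := len_cherry_eq hU hL1 hL2 hp1 hp2
            linarith
          · obtain ⟨py, hpy⟩ := exists_parent (leaf_ne_root hLy hx1r)
            have hne : y ≠ x := fun he => (Finset.mem_sdiff.mp hy).2 (he ▸ hx)
            exact len_inj_non_cherry hU hB huniq h12 hL1 hL2 hp1 hp2 hLy hLx hy1 hy2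
              hne hpy hpx h
    -- PD value of the candidates
    have hinf : ∀ y ∈ s \ u, ∀ hne : (insert y u).Nonempty,
        (insert y u).inf' hne T.len = T.len y := by
      intro y hy hne
      apply le_antisymm
      · exact Finset.inf'_le _ (Finset.mem_insert_self y u)
      · apply Finset.le_inf'
        intro b hb
        rcases Finset.mem_insert.mp hb with rfl | hbu
        · exact le_refl _
        · exact (hstrict b hbu y hy).le
    have hcand_leaf : ∀ y ∈ s \ u, ∀ z ∈ insert y u, T.IsLeaf z := by
      intro y hy z hz
      rcases Finset.mem_insert.mp hz with rfl | hzu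
      · exact (hmem z).mp (Finset.mem_sdiff.mp hy).1
      · exact (hmem z).mp (hus hzu)
    have hPDcand : ∀ y ∈ s \ u, T.PD ↑(insert y u) = T.hgt x1 + ∑ x ∈ u, T.len x := by
      intro y hy
      have hne : (insert y u).Nonempty := Finset.insert_nonempty y u
      rw [PD_formula hU hB huniq h12 hL1 hL2 hp1 hp2 _ (hcand_leaf y hy) hne,
        hinf y hy hne, Finset.sum_insert (Finset.mem_sdiff.mp hy).2]
      ring
    have hcandcard : ∀ y ∈ s \ u, (insert y u).card = k := by
      intro y hy
      rw [Finset.card_insert_of_notMem (Finset.mem_sdiff.mp hy).2, hucard]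
      omega
    -- upper bound, with equality characterization
    have hPDle : ∀ t : Finset V, (∀ z ∈ t, T.IsLeaf z) → t.card = k →
        T.PD ↑t ≤ T.hgt x1 + ∑ x ∈ u, T.len x ∧
          (T.PD ↑t = T.hgt x1 + ∑ x ∈ u, T.len x → ∃ y ∈ s \ u, t = insert y u) := by
      intro t htl htc
      have hts : t ⊆ s := fun z hz => (hmem z).mpr (htl z hz)
      have htne : t.Nonempty := Finset.card_pos.mp (by omega)
      obtain ⟨y0, hy0, hy0val⟩ := Finset.exists_mem_eq_inf' htne T.len
      have hPDt := PD_formula hU hB huniq h12 hL1 hL2 hp1 hp2 t htl htne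
      have hsum0 : ∑ x ∈ t.erase y0, T.len x + T.len y0 = ∑ x ∈ t, T.len x :=
        Finset.sum_erase_add t _ hy0
      have herase_sub : t.erase y0 ⊆ s := fun z hz => hts (Finset.mem_of_mem_erase hz)
      have hecard : (t.erase y0).card = k - 1 := by
        rw [Finset.card_erase_of_mem hy0, htc]
      have hle2 : ∑ x ∈ t.erase y0, T.len x ≤ ∑ x ∈ u, T.len x := by
        rcases eq_or_ne (t.erase y0) u with he | he
        · rw [he]
        · exact (sum_lt_top T.len hus herase_sub (by rw [hecard, hucard]) he hstrict).le
      constructor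
      · rw [hPDt, hy0val]
        linarith
      · intro heq
        rw [hPDt, hy0val] at heq
        have hsums : ∑ x ∈ t.erase y0, T.len x = ∑ x ∈ u, T.len x := by linarith
        have herase : t.erase y0 = u := by
          by_contra hne2
          exact absurd hsums
            (ne_of_lt (sum_lt_top T.len hus herase_sub (by rw [hecard, hucard]) hne2 hstrict))
        exact ⟨y0, Finset.mem_sdiff.mpr ⟨hts hy0, herase ▸ Finset.notMem_erase y0 t⟩,
          by rw [← herase, Finset.insert_erase hy0]⟩
    -- characterization of maxPD sets
    have hsune : (s \ u).Nonempty := Finset.card_pos.mp (by omega)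
    obtain ⟨y1, hy1⟩ := hsune
    have hchar : {A : Set V | T.IsMaxPD k A}
        = (fun y => (↑(insert y u) : Set V)) '' ↑(s \ u) := by
      ext A
      simp only [Set.mem_setOf_eq, Set.mem_image, Finset.mem_coe]
      constructor
      · rintro ⟨hAsub, hAcard, hAmax⟩
        have hfin : A.Finite := Set.toFinite A
        have hcoe : ↑hfin.toFinset = A := hfin.coe_toFinset
        have htAcard : hfin.toFinset.card = k := by
          rw [← Set.ncard_coe_finset, hcoe, hAcard]
        have htAleaf : ∀ z ∈ hfin.toFinset, T.IsLeaf z := by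
          intro z hz
          have : z ∈ A := hfin.mem_toFinset.mp hz
          exact hAsub this
        have hub := hPDle hfin.toFinset htAleaf htAcard
        have hge : T.hgt x1 + ∑ x ∈ u, T.len x ≤ T.PD ↑hfin.toFinset := by
          rw [hcoe, ← hPDcand y1 hy1]
          apply hAmax
          · rw [hls]
            intro z hz
            exact Finset.mem_coe.mpr (match Finset.mem_insert.mp (Finset.mem_coe.mp hz) with
              | Or.inl h => h ▸ (Finset.mem_sdiff.mp hy1).1
              | Or.inr h => hus h)
          · rw [Set.ncard_coe_finset]
            exact hcandcard y1 hy1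
        obtain ⟨y, hy, hteq⟩ := hub.2 (le_antisymm hub.1 hge)
        exact ⟨y, hy, by rw [← hteq, hcoe]⟩
      · rintro ⟨y, hy, rfl⟩
        refine ⟨?_, ?_, ?_⟩
        · rw [hls]
          intro z hz
          exact Finset.mem_coe.mpr (match Finset.mem_insert.mp (Finset.mem_coe.mp hz) with
            | Or.inl h => h ▸ (Finset.mem_sdiff.mp hy).1
            | Or.inr h => hus h)
        · rw [Set.ncard_coe_finset]
          exact hcandcard y hy
        · intro Y hY hYcard
          have hfin : Y.Finite := Set.toFinite Y
          have hcoe : ↑hfin.toFinset = Y := hfin.coe_toFinset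
          have htYcard : hfin.toFinset.card = k := by
            rw [← Set.ncard_coe_finset, hcoe, hYcard]
          have htYleaf : ∀ z ∈ hfin.toFinset, T.IsLeaf z := by
            intro z hz
            have : z ∈ Y := hfin.mem_toFinset.mp hz
            exact hY this
          have hub := hPDle hfin.toFinset htYleaf htYcard
          rw [← hcoe, hPDcand y hy]
          exact hub.1
    have hinj : Set.InjOn (fun y => (↑(insert y u) : Set V)) ↑(s \ u) := by
      intro a ha b hb hab
      simp only at hab
      have hfe : insert a u = insert b u := Finset.coe_inj.mp hab
      have hau : a ∉ u := (Finset.mem_sdiff.mp (Finset.mem_coe.mp ha)).2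
      have : a ∈ insert b u := hfe ▸ Finset.mem_insert_self a u
      rcases Finset.mem_insert.mp this with h | h
      · exact h
      · exact absurd h hau
    rw [hchar, Set.ncard_image_of_injOn hinj, Set.ncard_coe_finset]
    omega

end PhyloTree
/-- For an ultrametric rooted caterpillar tree on `n` leaves
and a branching value `k`, the number of size-`k` maxPD sets is `n − k + 1`. -/
theorem m_caterpillar_eq
    {V : Type} [Fintype V] [DecidableEq V] (T : PhyloTree V)
    (hU : T.Ultrametric) (hCat : T.IsCaterpillar) (n k : ℕ)
    (hn : n = T.leaves.ncard) (hk : 1 ≤ k) (hbv : T.IsBranchingValue k) :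
    T.m k = n - k + 1 := by
  classical
  obtain ⟨hB, p0, hcp0, hup⟩ := hCat
  obtain ⟨x1, x2, v1, h12, hpeq, hL1, hL2, hp1, hp2⟩ := hcp0
  have huniq : ∀ p q : Set V, T.IsCherry p → T.IsCherry q → p = q :=
    fun p q hp hq => (hup p hp).trans (hup q hq).symm
  have hkn : k ≤ T.leaves.ncard := PhyloTree.le_of_isBranchingValue hbv
  subst hn
  exact PhyloTree.maxPD_count hU hB huniq h12 hL1 hL2 hp1 hp2 k hk hkn
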